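/- Processed recursion inequality: there exist constants K > 0 depending only on K₂, L₁, L₂, K' > 0 depending only on K₄, and K'' > 0 depending only on K₃, K₅, and a constant M > 0 depending only on K₁,…,K₅, L₁, L₂, C₀, r such that the following holds. If t₀ ≥ ⌈M(p·log(max(p,3)) + x)⌉ and assumptions (A1), (A2), (A4), (A5) hold, then there are a nonnegative sequence (ε_t)_{t ≥ t₀} and a real sequence (u_t)_{t > t₀} with: V_{t+1} ≤ V_t + ε_t V_t^{3/2} + u_{t+1} for all t ∈ ℕ with t₀ ≤ t < t_exit; Σ_{r=s}^{t} ε_r ≤ K s^{−1/2} and Σ_{r=t₀+1}^{t} u_r ≤ K' p log t + K''(x + log t) for all s, t ∈ ℕ with t₀ ≤ s < t ≤ t_exit. -/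

import Mathlib

open Matrix MeasureTheory Real
open scoped RealInnerProductSpace BigOperators ENNReal

noncomputable section

/-- Vectors in `ℝ^p` with the Euclidean (`ℓ²`) norm. -/
abbrev Vec (p : ℕ) := EuclideanSpace ℝ (Fin p)

/-- Real `p × p` matrices. -/
abbrev Mat (p : ℕ) := Matrix (Fin p) (Fin p) ℝ

/-- A matrix applied to a Euclidean vector. -/
def mApp {p : ℕ} (A : Mat p) (v : Vec p) : Vec p := Matrix.toEuclideanLin A v

/-- The quadratic form `vᵀ A v`. For positive semidefinite `A` this equals
`‖A^{1/2} v‖₂²`. -/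
def quadForm {p : ℕ} (A : Mat p) (v : Vec p) : ℝ := ⟪v, mApp A v⟫

/-- The `ℓ² → ℓ²` operator (spectral) norm of a matrix. -/
def specNorm {p : ℕ} (A : Mat p) : ℝ :=
  ‖LinearMap.toContinuousLinearMap (Matrix.toEuclideanLin A)‖

/-- The exit time `t_exit = inf {t ∈ ℕ : t > t₀, θ_t ∉ Θ_r}`, valued in `ℕ∞`
(with `inf ∅ = ∞`). -/
def texit {p : ℕ} (θstar : Vec p) (r : ℝ) (t₀ : ℕ) (θ : ℕ → Vec p) : ℕ∞ :=
  sInf {n : ℕ∞ | ∃ t : ℕ, n = (t : ℕ∞) ∧ t₀ < t ∧ r < ‖θ t - θstar‖}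

variable {p : ℕ}

lemma quadForm_eq_dot (A : Mat p) (v : Vec p) : quadForm A v = dotProduct (WithLp.equiv 2 _ v) (A *ᵥ (WithLp.equiv 2 _ v)) := by
  simp [quadForm, mApp, Matrix.toEuclideanLin_apply, PiLp.inner_apply, dotProduct, RCLike.inner_apply, mul_comm]

lemma mApp_add (A B : Mat p) (v : Vec p) : mApp (A+B) v = mApp A v + mApp B v := by
  simp [mApp]

lemma quadForm_add (A B : Mat p) (v : Vec p) : quadForm (A+B) v = quadForm A v + quadForm B v := by
  simp [quadForm, mApp_add, inner_add_right]

lemma quadForm_sum {ι : Type*} (s : Finset ι) (A : ι → Mat p) (v : Vec p) :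
    quadForm (∑ i ∈ s, A i) v = ∑ i ∈ s, quadForm (A i) v := by
  classical
  induction s using Finset.induction with
  | empty => simp [quadForm, mApp]
  | insert _ _ h ih => simp [Finset.sum_insert h, quadForm_add, ih]

lemma quadForm_smul_mat (c : ℝ) (A : Mat p) (v : Vec p) : quadForm (c • A) v = c * quadForm A v := by
  have h : mApp (c • A) v = c • mApp A v := by
    simp only [mApp, _root_.map_smul, LinearMap.smul_apply]
  rw [quadForm, h, real_inner_smul_right, quadForm]

lemma quadForm_sub (A B : Mat p) (v : Vec p) : quadForm (A-B) v = quadForm A v - quadForm B v := by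
  simp [quadForm, mApp, map_sub, inner_sub_right]

lemma quadForm_smul_vec (c : ℝ) (A : Mat p) (v : Vec p) : quadForm A (c • v) = c^2 * quadForm A v := by
  have h : mApp A (c • v) = c • mApp A v := by simp [mApp]
  rw [quadForm, h, real_inner_smul_right, real_inner_smul_left, quadForm]; ring

lemma quadForm_neg_vec (A : Mat p) (v : Vec p) : quadForm A (-v) = quadForm A v := by
  have := quadForm_smul_vec (-1) A v
  simpa using this

lemma PosSemidef.quadForm_nonneg' {A : Mat p} (hA : A.PosSemidef) (v : Vec p) : 0 ≤ quadForm A v := by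
  rw [quadForm_eq_dot]
  have := hA.dotProduct_mulVec_nonneg ((WithLp.equiv 2 (Fin p → ℝ)) v)
  simpa using this

lemma abs_quadForm_le (A : Mat p) (v : Vec p) : |quadForm A v| ≤ specNorm A * ‖v‖^2 := by
  have h1 : |quadForm A v| ≤ ‖v‖ * ‖mApp A v‖ := abs_real_inner_le_norm _ _
  have h2 : ‖mApp A v‖ ≤ specNorm A * ‖v‖ :=
    (LinearMap.toContinuousLinearMap (Matrix.toEuclideanLin A)).le_opNorm v
  calc |quadForm A v| ≤ ‖v‖ * ‖mApp A v‖ := h1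
    _ ≤ ‖v‖ * (specNorm A * ‖v‖) := by
        apply mul_le_mul_of_nonneg_left h2 (norm_nonneg _)
    _ = specNorm A * ‖v‖^2 := by ring

lemma inner_mApp_symm {A : Mat p} (hA : A.IsHermitian) (x y : Vec p) :
    ⟪x, mApp A y⟫ = ⟪mApp A x, y⟫ := by
  have := (Matrix.isHermitian_iff_isSymmetric.mp hA) x y
  simpa [mApp] using this.symm

lemma mApp_mApp_inv {A : Mat p} (hA : A.PosDef) (x : Vec p) : mApp A (mApp A⁻¹ x) = x := by
  have hdet : IsUnit A.det := isUnit_iff_ne_zero.mpr (ne_of_gt hA.det_pos)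
  simp only [mApp, Matrix.toEuclideanLin_apply]
  simp [Matrix.mulVec_mulVec, Matrix.mul_nonsing_inv A hdet]

lemma quadForm_update {Ω : Mat p} (hPD : Ω.PosDef) (δ g : Vec p) :
    quadForm Ω (δ - mApp Ω⁻¹ g) = quadForm Ω δ - 2*⟪g,δ⟫ + quadForm Ω⁻¹ g := by
  set w := mApp Ω⁻¹ g with hw
  have hwg : mApp Ω w = g := mApp_mApp_inv hPD g
  have h1 : mApp Ω (δ - w) = mApp Ω δ - mApp Ω w := by
    simp [mApp, map_sub]
  have h2 : ⟪w, mApp Ω δ⟫ = ⟪g, δ⟫ := by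
    rw [inner_mApp_symm hPD.1 w δ, hwg]
  have h3 : ⟪w, g⟫ = quadForm Ω⁻¹ g := by
    rw [quadForm, real_inner_comm]
  have h4 : ⟪δ, g⟫ = ⟪g, δ⟫ := real_inner_comm _ _
  rw [quadForm, h1, hwg, inner_sub_left, inner_sub_right, inner_sub_right, h2, h3, h4]
  simp only [quadForm]; ring

lemma hess_isHermitian {f : Vec p → ℝ} {gr : Vec p → Vec p} {H : Vec p → Mat p}
    (h1 : ∀ y, HasGradientAt f (gr y) y)
    (h2 : ∀ y, HasFDerivAt gr (LinearMap.toContinuousLinearMap (Matrix.toEuclideanLin (H y))) y)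
    (y : Vec p) : (H y).IsHermitian := by
  have hf' : ∀ z, HasFDerivAt f (innerSL ℝ (gr z)) z := by
    intro z
    have heq : (innerSL ℝ (gr z) : Vec p →L[ℝ] ℝ) = (InnerProductSpace.toDual ℝ (Vec p)) (gr z) := by
      ext w; simp [InnerProductSpace.toDual_apply_apply]
    rw [heq]; exact (h1 z).hasFDerivAt
  have hD : HasFDerivAt (fun z => (innerSL ℝ (gr z) : Vec p →L[ℝ] ℝ))
      ((innerSL ℝ (E := Vec p)).comp (LinearMap.toContinuousLinearMap (Matrix.toEuclideanLin (H y)))) y :=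
    (innerSL ℝ (E := Vec p)).hasFDerivAt.comp y (h2 y)
  have hsymm := second_derivative_symmetric hf' hD
  rw [Matrix.isHermitian_iff_isSymmetric]
  intro v w
  have hvw := hsymm v w
  simp only [ContinuousLinearMap.comp_apply, LinearMap.coe_toContinuousLinearMap', innerSL_apply_apply] at hvw
  calc ⟪(Matrix.toEuclideanLin (H y)) v, w⟫ = ⟪(Matrix.toEuclideanLin (H y)) w, v⟫ := hvw
    _ = ⟪v, (Matrix.toEuclideanLin (H y)) w⟫ := real_inner_comm _ _

lemma posDef_of_quadForm {A : Mat p} (hherm : A.IsHermitian)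
    (h : ∀ v : Vec p, v ≠ 0 → 0 < quadForm A v) : A.PosDef := by
  refine .of_dotProduct_mulVec_pos hherm fun x hx => ?_
  have := h ((WithLp.equiv 2 _).symm x) (by simpa using hx)
  rw [quadForm_eq_dot] at this
  simpa using this

lemma quadForm_le_of_smul_psd {A B : Mat p} {c : ℝ}
    (h : (c • B - A).PosSemidef) (v : Vec p) : quadForm A v ≤ c * quadForm B v := by
  have h0 := PosSemidef.quadForm_nonneg' h v
  rw [quadForm_sub, quadForm_smul_mat] at h0
  linarith

lemma continuous_quadForm (v : Vec p) : Continuous fun A : Mat p => quadForm A v := by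
  have heq : (fun A : Mat p => quadForm A v)
      = fun A : Mat p => ∑ i, (WithLp.equiv 2 (Fin p → ℝ) v) i *
          ∑ j, A i j * (WithLp.equiv 2 (Fin p → ℝ) v) j := by
    funext A
    rw [quadForm_eq_dot]
    rfl
  rw [heq]
  refine continuous_finset_sum _ fun i _ => Continuous.mul continuous_const ?_
  refine continuous_finset_sum _ fun j _ => Continuous.mul ?_ continuous_const
  exact (continuous_apply j).comp (continuous_apply i)

lemma taylor_line {f : Vec p → ℝ} {gr : Vec p → Vec p} {H : Vec p → Mat p}
    (h1 : ∀ y, HasGradientAt f (gr y) y)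
    (h2 : ∀ y, HasFDerivAt gr (LinearMap.toContinuousLinearMap (Matrix.toEuclideanLin (H y))) y)
    (hc : Continuous H) (a η : Vec p) :
    f (a + η) = f a + ⟪gr a, η⟫ + ∫ v in (0:ℝ)..1, (1-v) * quadForm (H (a + v • η)) η := by
  set γ : ℝ → Vec p := fun v => a + v • η with hγdef
  have hγ : ∀ v₀ : ℝ, HasDerivAt γ η v₀ := by
    intro v₀
    have := ((hasDerivAt_id v₀).smul_const η).const_add a
    rw [one_smul] at this; exact this
  have hf' : ∀ z, HasFDerivAt f (innerSL ℝ (gr z)) z := by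
    intro z
    have heq : (innerSL ℝ (gr z) : Vec p →L[ℝ] ℝ) = (InnerProductSpace.toDual ℝ (Vec p)) (gr z) := by
      ext w; simp [InnerProductSpace.toDual_apply_apply]
    rw [heq]; exact (h1 z).hasFDerivAt
  have hF : ∀ v₀ : ℝ, HasDerivAt (fun v => f (γ v) + (1-v) * ⟪gr (γ v), η⟫)
      ((1-v₀) * quadForm (H (γ v₀)) η) v₀ := by
    intro v₀
    have h_fγ : HasDerivAt (fun v => f (γ v)) ⟪gr (γ v₀), η⟫ v₀ := by
      have := (hf' (γ v₀)).comp_hasDerivAt v₀ (hγ v₀)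
      exact this
    have h_g : HasDerivAt (fun v => gr (γ v)) (mApp (H (γ v₀)) η) v₀ := by
      have := (h2 (γ v₀)).comp_hasDerivAt v₀ (hγ v₀)
      exact this
    have h_inner : HasDerivAt (fun v => ⟪gr (γ v), η⟫) (quadForm (H (γ v₀)) η) v₀ := by
      have h' := HasDerivAt.inner ℝ h_g (hasDerivAt_const v₀ η)
      have : ⟪gr (γ v₀), (0:Vec p)⟫ + ⟪mApp (H (γ v₀)) η, η⟫ = quadForm (H (γ v₀)) η := by
        rw [inner_zero_right, zero_add, quadForm]; exact real_inner_comm _ _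
      rw [← this]; exact h'
    have h_lin : HasDerivAt (fun v : ℝ => 1 - v) (-1) v₀ := by
      exact (hasDerivAt_id' v₀).const_sub 1
    have h_prod := h_lin.mul h_inner
    have h_sum := h_fγ.add h_prod
    have hval : ⟪gr (γ v₀), η⟫ + (-1 * ⟪gr (γ v₀), η⟫ + (1 - v₀) * quadForm (H (γ v₀)) η)
        = (1-v₀) * quadForm (H (γ v₀)) η := by ring
    rw [← hval]
    exact h_sum
  have hcont : Continuous fun v : ℝ => (1-v) * quadForm (H (γ v)) η := by
    apply Continuous.mul (by continuity)
    exact (continuous_quadForm η).comp (hc.comp (by continuity))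
  have hint := intervalIntegral.integral_eq_sub_of_hasDerivAt
      (f := fun v => f (γ v) + (1-v) * ⟪gr (γ v), η⟫)
      (fun x _ => hF x) (hcont.intervalIntegrable 0 1)
  have e1 : γ 1 = a + η := by simp [hγdef]
  have e0 : γ 0 = a := by simp [hγdef]
  have goal' : f (a + η) = f a + ⟪gr a, η⟫ + ∫ v in (0:ℝ)..1, (1-v) * quadForm (H (γ v)) η := by
    beta_reduce at hint
    rw [hint, e1, e0]
    ring
  exact goal'

-- === avg_bound ===


lemma avg_bound {f : ℝ → ℝ} (hf : Continuous f) {F C : ℝ} (hF0 : 0 ≤ F) (hC : 0 ≤ C)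
    (hbound : ∀ w ∈ Set.Icc (0:ℝ) 1, |f w| ≤ F)
    (hkey : ∀ u ∈ Set.Ico (0:ℝ) 1,
      f 1 ≤ (2 / (1-u)^2) * (∫ w in u..(1:ℝ), (1-w) * f w) + C) :
    f 1 ≤ 2 * (∫ w in (0:ℝ)..1, w * f w) + C := by
  set ψ : ℝ → ℝ := fun w => (1-w) * f w with hψdef
  have hψc : Continuous ψ := by fun_prop
  set G : ℝ → ℝ := fun u => ∫ w in u..(1:ℝ), ψ w with hGdef
  have hGd : ∀ u : ℝ, HasDerivAt G (-ψ u) u := by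
    intro u
    have h1 : ∀ v : ℝ, G v = (∫ w in (0:ℝ)..1, ψ w) - ∫ w in (0:ℝ)..v, ψ w := by
      intro v
      have := intervalIntegral.integral_add_adjacent_intervals
        (hψc.intervalIntegrable (μ := volume) 0 v) (hψc.intervalIntegrable (μ := volume) v 1)
      simp only [hGdef]
      linarith [this]
    have h2 : HasDerivAt (fun v => ∫ w in (0:ℝ)..v, ψ w) (ψ u) u :=
      intervalIntegral.integral_hasDerivAt_right (hψc.intervalIntegrable 0 u)
        (hψc.stronglyMeasurableAtFilter _ _) hψc.continuousAt
    have h3 := (hasDerivAt_const u (∫ w in (0:ℝ)..1, ψ w)).sub h2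
    simp only [zero_sub] at h3
    have : G = fun v => (∫ w in (0:ℝ)..1, ψ w) - ∫ w in (0:ℝ)..v, ψ w := funext h1
    rw [this]
    exact h3
  have hGc : Continuous G := by
    have : ∀ u, HasDerivAt G (-ψ u) u := hGd
    exact (fun u => (this u).differentiableAt.continuousAt) |> fun h => continuous_iff_continuousAt.mpr h
  -- main estimate for each η ∈ (0,1)
  have main : ∀ η : ℝ, 0 < η → η < 1 → f 1 ≤ 2 * (∫ w in (0:ℝ)..1, w * f w) + C + 5*F*η + η * |f 1| := by
    intro η hη0 hη1
    set b := 1 - η with hbdef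
    have hb0 : 0 < b := by simp [hbdef]; linarith
    have hb1 : b < 1 := by simp [hbdef]; linarith
    -- FTC part
    set W : ℝ → ℝ := fun u => 2 * G u / (1-u) with hWdef
    have hWd : ∀ u ∈ Set.uIcc (0:ℝ) b, HasDerivAt W (2 * G u / (1-u)^2 - 2 * f u) u := by
      intro u hu
      rw [Set.uIcc_of_le hb0.le] at hu
      have hune : (1:ℝ) - u ≠ 0 := by
        have : u ≤ b := hu.2
        have : u < 1 := lt_of_le_of_lt this hb1
        intro h; linarith [h]
      have hd1 : HasDerivAt (fun u : ℝ => 2 * G u) (2 * (-ψ u)) u := (hGd u).const_mul 2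
      have hd2 : HasDerivAt (fun u : ℝ => 1 - u) (-1) u := by
        exact (hasDerivAt_id' u).const_sub 1
      have hdiv := hd1.div hd2 hune
      have : (2 * -ψ u * (1 - u) - 2 * G u * -1) / (1 - u) ^ 2 = 2 * G u / (1-u)^2 - 2 * f u := by
        field_simp [hψdef]
        ring
      rw [this] at hdiv
      exact hdiv
    have hicont : ContinuousOn (fun u => 2 * G u / (1-u)^2 - 2 * f u) (Set.uIcc 0 b) := by
      rw [Set.uIcc_of_le hb0.le]
      apply ContinuousOn.sub
      · apply ContinuousOn.div
        · exact (continuous_const.mul hGc).continuousOn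
        · fun_prop
        · intro u hu
          have hu1 : u < 1 := lt_of_le_of_lt hu.2 hb1
          have : (0:ℝ) < (1-u)^2 := by nlinarith
          exact ne_of_gt this
      · fun_prop
    have hftc := intervalIntegral.integral_eq_sub_of_hasDerivAt hWd
      (hicont.intervalIntegrable)
    -- pointwise bound on [0,b]
    have hmono : (∫ u in (0:ℝ)..b, f 1 - C) ≤ ∫ u in (0:ℝ)..b, (2 * G u / (1-u)^2 - 2 * f u) + 2 * f u := by
      apply intervalIntegral.integral_mono_on hb0.le
      · exact intervalIntegrable_const
      · apply IntervalIntegrable.add hicont.intervalIntegrable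
        exact ((continuous_const.mul hf).continuousOn).intervalIntegrable
      · intro u hu
        have hu1 : u < 1 := lt_of_le_of_lt hu.2 hb1
        have := hkey u ⟨hu.1, hu1⟩
        have hGu : (∫ w in u..(1:ℝ), (1-w) * f w) = G u := rfl
        rw [hGu] at this
        have : f 1 - C ≤ 2 / (1-u)^2 * G u := by linarith
        calc f 1 - C ≤ 2 / (1-u)^2 * G u := this
          _ = (2 * G u / (1-u)^2 - 2 * f u) + 2 * f u := by ring
    rw [intervalIntegral.integral_add hicont.intervalIntegrable
        ((by fun_prop : Continuous fun u => 2 * f u).continuousOn).intervalIntegrable, hftc] at hmono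
    rw [intervalIntegral.integral_const] at hmono
    -- bounds on the pieces
    have hWb : W b ≤ 2 * η * F := by
      have hGb : |G b| ≤ η * F * η := by
        have : ∀ w ∈ Set.uIoc b (1:ℝ), |ψ w| ≤ η * F := by
          intro w hw
          rw [Set.uIoc_of_le hb1.le] at hw
          have h1 : |1 - w| ≤ η := by
            rw [abs_le]; constructor <;> [linarith [hw.2]; linarith [hw.1, hbdef ▸ hw.1]]
          have h2 : |f w| ≤ F := hbound w ⟨by linarith [hw.1], hw.2⟩
          calc |ψ w| = |1-w| * |f w| := abs_mul _ _
            _ ≤ η * F := mul_le_mul h1 h2 (abs_nonneg _) hη0.le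
        have := intervalIntegral.norm_integral_le_of_norm_le_const (C := η * F)
          (f := ψ) (a := b) (b := (1:ℝ)) (by
          intro w hw; rw [Real.norm_eq_abs]; exact this w hw)
        rw [Real.norm_eq_abs] at this
        calc |G b| ≤ η * F * |1 - b| := this
          _ = η * F * η := by rw [hbdef]; simp [abs_of_pos hη0]
      have h1b : (1:ℝ) - b = η := by rw [hbdef]; ring
      rw [hWdef]
      simp only [h1b]
      rw [div_le_iff₀ hη0]
      calc 2 * G b ≤ 2 * |G b| := by have := le_abs_self (G b); linarith
        _ ≤ 2 * (η * F * η) := by linarith [hGb]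
        _ = 2 * η * F * η := by ring
    have hW0 : W 0 = 2 * ∫ w in (0:ℝ)..1, ψ w := by rw [hWdef]; simp; rfl
    have hsplit : (∫ u in (0:ℝ)..b, 2 * f u) = 2 * ((∫ u in (0:ℝ)..1, f u) - ∫ u in b..(1:ℝ), f u) := by
      have hadj := intervalIntegral.integral_add_adjacent_intervals (μ := volume)
        (hf.intervalIntegrable 0 b) (hf.intervalIntegrable b 1)
      rw [intervalIntegral.integral_const_mul]
      linarith [hadj]
    have htail : |∫ u in b..(1:ℝ), f u| ≤ F * η := by
      have := intervalIntegral.norm_integral_le_of_norm_le_const (C := F) (f := f) (a := b) (b := 1) (by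
        intro w hw
        rw [Set.uIoc_of_le hb1.le] at hw
        rw [Real.norm_eq_abs]
        exact hbound w ⟨by linarith [hw.1], hw.2⟩)
      rw [Real.norm_eq_abs] at this
      calc |∫ u in b..(1:ℝ), f u| ≤ F * |1 - b| := this
        _ = F * η := by rw [hbdef]; simp [abs_of_pos hη0]
    have hcomb : (∫ w in (0:ℝ)..1, f w) - (∫ w in (0:ℝ)..1, ψ w) = ∫ w in (0:ℝ)..1, w * f w := by
      rw [← intervalIntegral.integral_sub (hf.intervalIntegrable 0 1) (hψc.intervalIntegrable 0 1)]
      apply intervalIntegral.integral_congr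
      intro w hw
      simp [hψdef]; ring
    -- put it together
    rw [smul_eq_mul] at hmono
    have hb_eq : (b - 0) * (f 1 - C) = (f 1 - C) * b := by ring
    rw [hb_eq] at hmono
    -- hmono : (f 1 - C) * b ≤ (W b - W 0) + ∫ 0..b, 2 f u
    have final : (f 1 - C) * b ≤ 2*η*F - 2 * (∫ w in (0:ℝ)..1, ψ w) + 2 * (∫ u in (0:ℝ)..1, f u) + 2*F*η := by
      rw [hsplit] at hmono
      have : 2 * ((∫ u in (0:ℝ)..1, f u) - ∫ u in b..(1:ℝ), f u)
          ≤ 2 * (∫ u in (0:ℝ)..1, f u) + 2*F*η := by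
        have := neg_abs_le (∫ u in b..(1:ℝ), f u)
        nlinarith [htail]
      nlinarith [hWb, hW0, hmono]
    have final2 : (f 1 - C) * b ≤ 2 * (∫ w in (0:ℝ)..1, w * f w) + 4*F*η := by
      have : 2 * (∫ u in (0:ℝ)..1, f u) - 2 * (∫ w in (0:ℝ)..1, ψ w) = 2 * ∫ w in (0:ℝ)..1, w * f w := by
        rw [← hcomb]; ring
      nlinarith [final]
    -- f 1 = (f 1 - C) * b + ... expand b = 1 - η
    have hexp : f 1 = (f 1 - C)*b + C + η * f 1 - η * C := by rw [hbdef]; ring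
    have h5 : η * f 1 ≤ η * |f 1| := by
      have := le_abs_self (f 1); nlinarith
    have h6 : 0 ≤ η * C := by positivity
    have h7 : 4*F*η ≤ 5*F*η := by nlinarith
    linarith [final2, hexp]
  -- limit η → 0
  have : ∀ ε : ℝ, 0 < ε → f 1 ≤ 2 * (∫ w in (0:ℝ)..1, w * f w) + C + ε := by
    intro ε hε
    set η := min (ε / (5*F + |f 1| + 1)) (1/2) with hηdef
    have hden : (0:ℝ) < 5*F + |f 1| + 1 := by positivity
    have hη0 : 0 < η := by
      apply lt_min
      · positivity
      · norm_num
    have hη1 : η < 1 := lt_of_le_of_lt (min_le_right _ _) (by norm_num)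
    have := main η hη0 hη1
    have hkey2 : 5*F*η + η * |f 1| ≤ ε := by
      have h1 : η ≤ ε / (5*F + |f 1| + 1) := min_le_left _ _
      have h2 : 5*F*η + η*|f 1| = η * (5*F + |f 1|) := by ring
      rw [h2]
      calc η * (5*F + |f 1|) ≤ (ε / (5*F + |f 1| + 1)) * (5*F + |f 1|) := by
            apply mul_le_mul_of_nonneg_right h1 (by positivity)
        _ ≤ ε := by
            rw [div_mul_eq_mul_div, div_le_iff₀ hden]
            nlinarith [abs_nonneg (f 1), hF0, hε]
    linarith
  exact le_of_forall_pos_le_add this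


section KEY
variable {p : ℕ}

set_option maxHeartbeats 1600000 in
lemma key_quad_bound
    {f : Vec p → ℝ} {gr : Vec p → Vec p} {H : Vec p → Mat p}
    (h1 : ∀ y, HasGradientAt f (gr y) y)
    (h2 : ∀ y, HasFDerivAt gr (LinearMap.toContinuousLinearMap (Matrix.toEuclideanLin (H y))) y)
    (hc : Continuous H)
    {θstar θc : Vec p} {r L₁ L₂ : ℝ} (hL₁ : 0 ≤ L₁) (hL₂ : 0 < L₂)
    (hball : ‖θc - θstar‖ ≤ r)
    (hA2 : ∀ θ₁ θ₂ : Vec p, ‖θ₁ - θstar‖ ≤ r → ‖θ₂ - θstar‖ ≤ r →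
        ∃ φ : ℝ, 0 ≤ φ ∧ φ ≤ L₁ * ‖θ₁ - θ₂‖ ∧ ∃ c ∈ Set.Icc (0:ℝ) 1,
          f θ₁ = f θ₂ + ⟪gr θ₂, θ₁ - θ₂⟫
            + (1/2) * quadForm (H (θ₂ + c • (θ₁ - θ₂))) (θ₁ - θ₂) ∧
          ((1 + φ) • H (θ₂ + c • (θ₁ - θ₂)) - H θ₁).PosSemidef)
    (hspec : ∀ y : Vec p, ‖y - θstar‖ ≤ r → specNorm (H y) ≤ L₂)
    (hPSD : (H θc).PosSemidef) :
    quadForm (H θc) (θc - θstar) ≤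
      2 * (∫ w in (0:ℝ)..1, w * quadForm (H (θstar + w • (θc - θstar))) (θc - θstar))
      + L₁ * L₂ * ‖θc - θstar‖^3 := by
  set δ : Vec p := θc - θstar with hδdef
  have hθc : θc = θstar + δ := by rw [hδdef]; abel
  clear_value δ
  set fl : ℝ → ℝ := fun w => quadForm (H (θstar + w • δ)) δ with hfldef
  have hflc : Continuous fl := by
    apply (continuous_quadForm δ).comp
    apply hc.comp
    exact continuous_const.add (continuous_id.smul continuous_const)
  have hmem : ∀ w : ℝ, |w| ≤ 1 → ‖(θstar + w • δ) - θstar‖ ≤ r := by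
    intro w hw
    have : (θstar + w • δ) - θstar = w • δ := by abel
    rw [this, norm_smul]
    calc |w| * ‖δ‖ ≤ 1 * ‖δ‖ := mul_le_mul_of_nonneg_right hw (norm_nonneg _)
      _ = ‖δ‖ := one_mul _
      _ ≤ r := hball
  have hfl1 : fl 1 = quadForm (H θc) δ := by
    rw [hfldef]; simp only [one_smul, ← hθc]
  have hboundfl : ∀ w ∈ Set.Icc (0:ℝ) 1, |fl w| ≤ L₂ * ‖δ‖^2 := by
    intro w hw
    have h1' := abs_quadForm_le (H (θstar + w • δ)) δ
    have h2' := hspec _ (hmem w (by rw [abs_le]; exact ⟨by linarith [hw.1], hw.2⟩))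
    calc |fl w| ≤ specNorm (H (θstar + w • δ)) * ‖δ‖^2 := h1'
      _ ≤ L₂ * ‖δ‖^2 := mul_le_mul_of_nonneg_right h2' (by positivity)
  have hkeyfl : ∀ u ∈ Set.Ico (0:ℝ) 1,
      fl 1 ≤ (2 / (1-u)^2) * (∫ w in u..(1:ℝ), (1-w) * fl w) + L₁ * L₂ * ‖δ‖^3 := by
    intro u hu
    have hu0 : 0 ≤ u := hu.1
    have hu1 : u < 1 := hu.2
    have h1u : (0:ℝ) < 1 - u := by linarith
    set au : Vec p := θstar + u • δ with haudef
    clear_value au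
    have hauball : ‖au - θstar‖ ≤ r := by
      rw [haudef]; exact hmem u (by rw [abs_of_nonneg hu0]; linarith)
    have hdiff : θc - au = (1-u) • δ := by rw [hθc, haudef]; module
    have hball' : ‖θc - θstar‖ ≤ r := by rw [← hδdef]; exact hball
    obtain ⟨φ, hφ0, hφle, c, hc01, htay, hpsd⟩ := hA2 θc au hball' hauball
    rw [hdiff] at htay hpsd
    set mid : Vec p := au + c • ((1-u) • δ) with hmiddef
    clear_value mid
    have hmid2 : mid = θstar + (u + c*(1-u)) • δ := by rw [hmiddef, haudef]; module
    have hmidball : ‖mid - θstar‖ ≤ r := by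
      rw [hmid2]
      apply hmem
      rw [abs_of_nonneg (by nlinarith [hc01.1, hc01.2] : (0:ℝ) ≤ u + c*(1-u))]
      nlinarith [hc01.1, hc01.2]
    -- Taylor from calculus
    have htl := taylor_line h1 h2 hc au ((1-u) • δ)
    have hauadd : au + (1-u) • δ = θc := by rw [haudef, hθc]; module
    rw [hauadd] at htl
    -- equate remainders
    have heq : (1/2) * quadForm (H mid) ((1-u) • δ)
        = ∫ v in (0:ℝ)..1, (1-v) * quadForm (H (au + v • ((1-u) • δ))) ((1-u) • δ) := by
      rw [htay] at htl; linarith [htl]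
    -- rescale the quadratic forms
    have hargs : ∀ v : ℝ, au + v • ((1-u) • δ) = θstar + (u + v*(1-u)) • δ := by
      intro v; rw [haudef]; module
    have hrw : (∫ v in (0:ℝ)..1, (1-v) * quadForm (H (au + v • ((1-u) • δ))) ((1-u) • δ))
        = (1-u)^2 * ∫ v in (0:ℝ)..1, (1-v) * fl (u + v*(1-u)) := by
      rw [← intervalIntegral.integral_const_mul]
      apply intervalIntegral.integral_congr
      intro v _
      beta_reduce
      rw [hargs v, quadForm_smul_vec, hfldef]
      ring
    rw [hrw, quadForm_smul_vec] at heq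
    have hqmid : quadForm (H mid) δ = 2 * ∫ v in (0:ℝ)..1, (1-v) * fl (u + v*(1-u)) := by
      have h2ne : ((1-u)^2 : ℝ) ≠ 0 := by positivity
      have heq2 : (1-u)^2 * ((1/2) * quadForm (H mid) δ)
          = (1-u)^2 * ∫ v in (0:ℝ)..1, (1-v) * fl (u + v*(1-u)) := by linarith [heq]
      have := mul_left_cancel₀ h2ne heq2
      linarith [this]
    -- substitution to w-variable
    have hsubst : (∫ v in (0:ℝ)..1, (1-v) * fl (u + v*(1-u)))
        = (1/(1-u)^2) * ∫ w in u..(1:ℝ), (1-w) * fl w := by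
      set ψ : ℝ → ℝ := fun w => (1-w) * fl w with hψdef
      have hcomp := intervalIntegral.integral_comp_mul_add ψ (ne_of_gt h1u) u
        (a := (0:ℝ)) (b := (1:ℝ))
      have he1 : (1-u) * (0:ℝ) + u = u := by ring
      have he2 : (1-u) * (1:ℝ) + u = 1 := by ring
      rw [he1, he2] at hcomp
      have hpt : (fun v => (1-v) * fl (u + v*(1-u)))
          = fun v => (1/(1-u)) * ψ ((1-u) * v + u) := by
        funext v
        rw [hψdef]
        have : (1:ℝ) - ((1-u)*v + u) = (1-u)*(1-v) := by ring
        simp only [this]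
        have harg : (1-u)*v + u = u + v*(1-u) := by ring
        rw [harg]
        field_simp
      rw [hpt, intervalIntegral.integral_const_mul, hcomp, smul_eq_mul]
      have hrw2 : (1:ℝ)/(1-u)^2 = (1-u)⁻¹ * (1-u)⁻¹ := by
        rw [one_div, sq, mul_inv]
      rw [hrw2]
      ring
    -- PSD comparison
    have hcmp : quadForm (H θc) δ ≤ (1+φ) * quadForm (H mid) δ :=
      quadForm_le_of_smul_psd hpsd δ
    have hqmb : |quadForm (H mid) δ| ≤ L₂ * ‖δ‖^2 := by
      have h1' := abs_quadForm_le (H mid) δ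
      have h2' := hspec _ hmidball
      calc |quadForm (H mid) δ| ≤ specNorm (H mid) * ‖δ‖^2 := h1'
        _ ≤ L₂ * ‖δ‖^2 := mul_le_mul_of_nonneg_right h2' (by positivity)
    have hφle' : φ ≤ L₁ * ‖δ‖ := by
      have hn : ‖(1-u) • δ‖ ≤ ‖δ‖ := by
        rw [norm_smul, Real.norm_eq_abs, abs_of_pos h1u]
        have h01 : 1 - u ≤ 1 := by linarith
        nlinarith [norm_nonneg δ]
      calc φ ≤ L₁ * ‖θc - au‖ := hφle
        _ = L₁ * ‖(1-u) • δ‖ := by rw [hdiff]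
        _ ≤ L₁ * ‖δ‖ := mul_le_mul_of_nonneg_left hn hL₁
    have hfin : quadForm (H θc) δ ≤ quadForm (H mid) δ + L₁ * L₂ * ‖δ‖^3 := by
      have hstep : φ * quadForm (H mid) δ ≤ L₁ * L₂ * ‖δ‖^3 := by
        calc φ * quadForm (H mid) δ ≤ φ * |quadForm (H mid) δ| := by
              have := le_abs_self (quadForm (H mid) δ); nlinarith
          _ ≤ (L₁ * ‖δ‖) * (L₂ * ‖δ‖^2) := by
              apply mul_le_mul hφle' hqmb (abs_nonneg _) (by positivity)
          _ = L₁ * L₂ * ‖δ‖^3 := by ring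
      nlinarith [hcmp, hstep]
    rw [hfl1, hqmid] at *
    rw [hsubst] at hfin
    calc quadForm (H θc) δ ≤ 2 * ((1/(1-u)^2) * ∫ w in u..(1:ℝ), (1-w) * fl w) + L₁ * L₂ * ‖δ‖^3 := by
          linarith [hfin]
      _ = (2 / (1-u)^2) * (∫ w in u..(1:ℝ), (1-w) * fl w) + L₁ * L₂ * ‖δ‖^3 := by ring
  have := avg_bound hflc (by positivity) (by positivity) hboundfl hkeyfl
  rw [hfl1] at this
  exact this

end KEY

lemma sum_inv_rsqrt (s : ℕ) (hs : 1 ≤ s) : ∀ t : ℕ,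
    ∑ r ∈ Finset.Icc s t, 1/((r:ℝ) * Real.sqrt r) ≤ 3 / Real.sqrt s := by
  have hs0 : (0:ℝ) < s := by exact_mod_cast hs
  have hss : (0:ℝ) < Real.sqrt s := Real.sqrt_pos.mpr hs0
  have main : ∀ t : ℕ, s ≤ t →
      ∑ r ∈ Finset.Icc s t, 1/((r:ℝ) * Real.sqrt r) ≤ 3 / Real.sqrt s - 2 / Real.sqrt t := by
    intro t ht
    induction t, ht using Nat.le_induction with
    | base =>
      rw [Finset.Icc_self, Finset.sum_singleton]
      have h1 : (1:ℝ) ≤ Real.sqrt s := by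
        rw [show (1:ℝ) = Real.sqrt 1 by simp]
        exact Real.sqrt_le_sqrt (by exact_mod_cast hs)
      have hs1 : (1:ℝ) ≤ (s:ℝ) := by exact_mod_cast hs
      have h2 : Real.sqrt s ≤ (s:ℝ) * Real.sqrt s := by nlinarith
      have h3 : 1/((s:ℝ) * Real.sqrt s) ≤ 1/Real.sqrt s :=
        one_div_le_one_div_of_le hss h2
      have : 3 / Real.sqrt s - 2 / Real.sqrt s = 1 / Real.sqrt s := by ring
      linarith
    | succ t ht ih =>
      rw [Finset.sum_Icc_succ_top (by omega : s ≤ t + 1)]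
      have ht1 : (1:ℝ) ≤ (t:ℝ) := by exact_mod_cast le_trans hs ht
      set a := Real.sqrt t with hadef
      set b := Real.sqrt ((t:ℝ)+1) with hbdef
      have ha0 : 0 < a := Real.sqrt_pos.mpr (by linarith)
      have hb0 : 0 < b := Real.sqrt_pos.mpr (by linarith)
      have ha2 : a^2 = (t:ℝ) := Real.sq_sqrt (by linarith)
      have hb2 : b^2 = (t:ℝ)+1 := Real.sq_sqrt (by linarith)
      have hab : a ≤ b := Real.sqrt_le_sqrt (by linarith)
      have hb1 : 1 ≤ b := by nlinarith
      have hcast : ((t+1:ℕ):ℝ) = (t:ℝ)+1 := by push_cast; ring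
      have key : 1/(((t+1:ℕ):ℝ) * Real.sqrt ((t+1:ℕ):ℝ)) ≤ 2/a - 2/b := by
        rw [hcast, ← hbdef, ← hb2]
        have h2 : (b-a)*(b+a) = 1 := by nlinarith
        have e1 : 2/a - 2/b = (2*b - 2*a)/(a*b) := by
          field_simp
        rw [e1, div_le_div_iff₀ (by nlinarith) (by positivity)]
        have h5 : a*b ≤ b*b := mul_le_mul_of_nonneg_right hab hb0.le
        have h6 : a + b ≤ 2*b := by linarith
        have key2 : a*b*(a+b) ≤ 2*b^3 := by nlinarith [mul_pos ha0 hb0]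
        have hba : 0 < b + a := by linarith
        have h4 : (1*(a*b))*(b+a) ≤ ((2*b-2*a)*(b^2*b))*(b+a) := by
          have e3 : ((2*b-2*a)*(b^2*b))*(b+a) = 2*b^3 := by linear_combination (2*b^3) * h2
          rw [e3]
          nlinarith [key2]
        exact le_of_mul_le_mul_right h4 hba
      have hfinal : 2/a - 2/b + (3/Real.sqrt s - 2/a) = 3/Real.sqrt s - 2/b := by ring
      have := add_le_add ih key
      rw [hadef, hbdef] at this
      rw [hcast] at this ⊢
      linarith [this]
  intro t
  by_cases ht : s ≤ t
  · have := main t ht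
    have h3 : 0 ≤ 2/Real.sqrt (t:ℝ) := by positivity
    linarith [this]
  · rw [Finset.Icc_eq_empty (by omega)]
    simp only [Finset.sum_empty]
    positivity

lemma rpow_three_halves {x : ℝ} (hx : 0 ≤ x) : x ^ ((3:ℝ)/2) = x * Real.sqrt x := by
  rcases eq_or_lt_of_le hx with h | h
  · rw [← h]; simp [Real.zero_rpow (by norm_num : (3:ℝ)/2 ≠ 0)]
  · have h32 : (3:ℝ)/2 = 1 + 1/2 := by norm_num
    rw [h32, Real.rpow_add h, Real.rpow_one, Real.sqrt_eq_rpow]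


section Helpers
variable {p : ℕ}

lemma quadForm_pos_of_posDef {A : Mat p} (hA : A.PosDef) {v : Vec p} (hv : v ≠ 0) :
    0 < quadForm A v := by
  rw [quadForm_eq_dot]
  have := hA.dotProduct_mulVec_pos (x := (WithLp.equiv 2 (Fin p → ℝ)) v) (by simpa using hv)
  simpa using this

lemma isHermitian_sum {ι : Type*} (s : Finset ι) (g : ι → Mat p)
    (h : ∀ i ∈ s, (g i).IsHermitian) : (∑ i ∈ s, g i).IsHermitian := by
  unfold Matrix.IsHermitian
  rw [Matrix.conjTranspose_sum]
  exact Finset.sum_congr rfl h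

end Helpers

set_option maxHeartbeats 2000000 in
/-- processed recursion inequality (Lemma 2 of the paper).
The quantifier order encodes the dependencies: `K = K(K₂, L₁, L₂)`,
`K' = K'(K₄)`, `K'' = K''(K₃, K₅)`, `M = M(K₁,…,K₅, L₁, L₂, C₀, r)`. -/
theorem stmt3 :
    ∀ K₂ L₁ L₂ : ℝ, 0 < K₂ → 0 ≤ L₁ → 0 < L₂ →
    ∃ K : ℝ, 0 < K ∧
    ∀ K₄ : ℝ, 0 < K₄ →
    ∃ K' : ℝ, 0 < K' ∧
    ∀ K₃ K₅ : ℝ, 0 < K₃ → 0 < K₅ →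
    ∃ K'' : ℝ, 0 < K'' ∧
    ∀ K₁ C₀ r : ℝ, 0 < K₁ → 0 < C₀ → 0 < r →
    ∃ M : ℝ, 0 < M ∧
    ∀ (p : ℕ) (x : ℝ) (θstar : Vec p) (ℓ : ℕ → Vec p → ℝ)
      (grad : ℕ → Vec p → Vec p) (hess : ℕ → Vec p → Mat p)
      (t₀ : ℕ) (Ω₀ : Mat p) (θ : ℕ → Vec p) (Ω : ℕ → Mat p),
      0 < x →
      -- ℓ_t is C² with gradient `grad` and Hessian `hess`
      (∀ t y, HasGradientAt (ℓ t) (grad t y) y) →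
      (∀ t y, HasFDerivAt (grad t)
        (LinearMap.toContinuousLinearMap (Matrix.toEuclideanLin (hess t y))) y) →
      (∀ t, Continuous (hess t)) →
      -- algorithm
      Ω₀.PosDef →
      Ω t₀ = Ω₀ + ∑ s ∈ Finset.Icc 1 t₀, hess s (θ t₀) →
      (∀ t, t₀ < t → Ω t = Ω (t - 1) + hess t (θ (t - 1))) →
      (∀ t, t₀ < t → θ t = θ (t - 1) - mApp (Ω t)⁻¹ (grad t (θ (t - 1)))) →
      (∀ t, t₀ < t → (hess t (θ (t - 1))).PosSemidef) →
      -- (A1): λ_min(Σ_{s≤t} ∇²ℓ_s(θ̄_s)) ≥ K₂ t uniformly over Θ_r-valued sequences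
      (∀ t : ℕ, K₁ * (p + x) ≤ (t : ℝ) → ∀ θbar : ℕ → Vec p,
        (∀ s ∈ Finset.Icc 1 t, ‖θbar s - θstar‖ ≤ r) →
        ∀ v : Vec p, K₂ * t * ‖v‖ ^ 2 ≤
          quadForm (∑ s ∈ Finset.Icc 1 t, hess s (θbar s)) v) →
      -- (A2): exact second-order Taylor expansion with comparable curvature
      (∀ (t : ℕ) (θ₁ θ₂ : Vec p), ‖θ₁ - θstar‖ ≤ r → ‖θ₂ - θstar‖ ≤ r →
        ∃ φ : ℝ, 0 ≤ φ ∧ φ ≤ L₁ * ‖θ₁ - θ₂‖ ∧ ∃ c ∈ Set.Icc (0 : ℝ) 1,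
          ℓ t θ₁ = ℓ t θ₂ + ⟪grad t θ₂, θ₁ - θ₂⟫
              + (1 / 2) * quadForm (hess t (θ₂ + c • (θ₁ - θ₂))) (θ₁ - θ₂) ∧
          ((1 + φ) • hess t (θ₂ + c • (θ₁ - θ₂)) - hess t θ₁).PosSemidef) →
      (∀ (t : ℕ) (y : Vec p), ‖y - θstar‖ ≤ r → specNorm (hess t y) ≤ L₂) →
      -- (A4)
      K₁ * (p + x) ≤ (t₀ : ℝ) →
      (∀ t : ℕ, t₀ < t →
        ∑ s ∈ Finset.Icc (t₀ + 1) t, (ℓ s θstar - ℓ s (θ (s - 1))) ≤ K₃ * x) →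
      (∀ t : ℕ, t₀ < t → (t : ℕ∞) ≤ texit θstar r t₀ θ →
        ∑ s ∈ Finset.Icc (t₀ + 1) t, quadForm (Ω s)⁻¹ (grad s (θ (s - 1)))
          ≤ K₄ * p * Real.log t + K₅ * (x + Real.log t)) →
      -- (A5)
      ‖θ t₀ - θstar‖ ≤ r →
      quadForm (Ω t₀) (θ t₀ - θstar) ≤ C₀ * (p + x) →
      -- warm-start length
      ⌈M * (p * Real.log (max (p : ℝ) 3) + x)⌉₊ ≤ t₀ →
      -- conclusion
      ∃ ε u : ℕ → ℝ,
        (∀ t, t₀ ≤ t → 0 ≤ ε t) ∧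
        (∀ t : ℕ, t₀ ≤ t → (t : ℕ∞) < texit θstar r t₀ θ →
          quadForm (Ω (t + 1)) (θ (t + 1) - θstar)
            ≤ quadForm (Ω t) (θ t - θstar)
              + ε t * (quadForm (Ω t) (θ t - θstar)) ^ ((3 : ℝ) / 2)
              + u (t + 1)) ∧
        (∀ s t : ℕ, t₀ ≤ s → s < t → (t : ℕ∞) ≤ texit θstar r t₀ θ →
          ∑ r' ∈ Finset.Icc s t, ε r' ≤ K / Real.sqrt s) ∧
        (∀ s t : ℕ, t₀ ≤ s → s < t → (t : ℕ∞) ≤ texit θstar r t₀ θ →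
          ∑ r' ∈ Finset.Icc (t₀ + 1) t, u r'
            ≤ K' * p * Real.log t + K'' * (x + Real.log t)) := by
  intro K₂ L₁ L₂ hK₂ hL₁ hL₂
  refine ⟨3*(L₁*L₂/(K₂*Real.sqrt K₂)) + 1, by positivity, ?_⟩
  intro K₄ hK₄
  refine ⟨K₄, hK₄, ?_⟩
  intro K₃ K₅ hK₃ hK₅
  refine ⟨2*K₃ + K₅, by positivity, ?_⟩
  intro K₁ C₀ r hK₁ hC₀ hr
  refine ⟨1, one_pos, ?_⟩
  intro p x θstar ℓ grad hess t₀ Ω₀ θ Ω hx hgrad hhess hhessc hΩ₀ hΩt₀ hΩrec hθrec hPSD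
    hA1 hA2 hspec hA4a hA4b hA4c hA5a hA5b hwarm
  -- basic facts
  have ht₀pos : 0 < t₀ := by
    by_contra h
    push_neg at h
    interval_cases t₀
    have : (0:ℝ) < K₁ * (p + x) := by positivity
    simp at hA4a
    linarith
  have ht₀1 : 1 ≤ t₀ := ht₀pos
  have hherm : ∀ τ y, (hess τ y).IsHermitian := fun τ y =>
    hess_isHermitian (hgrad τ) (hhess τ) y
  -- staying in the ball before exit
  have hθball : ∀ m : ℕ, t₀ ≤ m → ((m:ℕ∞) < texit θstar r t₀ θ) → ‖θ m - θstar‖ ≤ r := by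
    intro m hm hlt
    by_contra hcon
    push_neg at hcon
    rcases eq_or_lt_of_le hm with he | hgt
    · rw [← he] at hcon; linarith
    · have hle : texit θstar r t₀ θ ≤ (m:ℕ∞) := sInf_le ⟨m, rfl, hgt, hcon⟩
      exact absurd hlt (not_lt.mpr hle)
  -- closed form of Ω
  have hΩform : ∀ t, t₀ ≤ t → Ω t = Ω t₀ + ∑ s ∈ Finset.Ioc t₀ t, hess s (θ (s-1)) := by
    intro t ht
    induction t, ht using Nat.le_induction with
    | base => simp
    | succ t ht ih =>
      have h1 := hΩrec (t+1) (by omega)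
      simp only [Nat.add_sub_cancel] at h1
      rw [h1, ih, Finset.sum_Ioc_succ_top (by omega : t₀ ≤ t)]
      abel
  -- Ω t₀ is positive definite
  have hΩt₀PD : (Ω t₀).PosDef := by
    have hq := hA1 t₀ hA4a (fun _ => θ t₀) (fun s _ => hA5a)
    rw [hΩt₀]
    apply posDef_of_quadForm
    · exact Matrix.IsHermitian.add hΩ₀.1
        (isHermitian_sum _ _ (fun i _ => hherm i (θ t₀)))
    · intro v hv
      rw [quadForm_add]
      have h1 : 0 < quadForm Ω₀ v := quadForm_pos_of_posDef hΩ₀ hv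
      have h2 := hq v
      have h3 : (0:ℝ) ≤ K₂ * t₀ * ‖v‖^2 := by positivity
      linarith
  have hΩPD : ∀ t, t₀ ≤ t → (Ω t).PosDef := by
    intro t ht
    induction t, ht using Nat.le_induction with
    | base => exact hΩt₀PD
    | succ t ht ih =>
      have h1 := hΩrec (t+1) (by omega)
      simp only [Nat.add_sub_cancel] at h1
      rw [h1]
      exact ih.add_posSemidef (by simpa using hPSD (t+1) (by omega))
  -- lower bound on the quadratic form of Ω t
  have hlow : ∀ t : ℕ, t₀ ≤ t → ((t:ℕ∞) < texit θstar r t₀ θ) → ∀ v : Vec p,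
      K₂ * t * ‖v‖^2 ≤ quadForm (Ω t) v := by
    intro t ht hlt v
    set θbar : ℕ → Vec p := fun s => if s ≤ t₀ then θ t₀ else θ (s-1) with hθbardef
    have hmem : ∀ s ∈ Finset.Icc 1 t, ‖θbar s - θstar‖ ≤ r := by
      intro s hs
      rw [hθbardef]
      by_cases hst : s ≤ t₀
      · simp only [hst, if_true]; exact hA5a
      · simp only [hst, if_false]
        rw [Finset.mem_Icc] at hs
        apply hθball (s-1) (by omega)
        have hs' : ((s-1:ℕ):ℕ∞) < (t:ℕ∞) := by
          rw [Nat.cast_lt]; omega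
        exact lt_trans hs' hlt
    have hA1t := hA1 t (le_trans hA4a (by exact_mod_cast ht)) θbar hmem v
    have hsplit : ∑ s ∈ Finset.Icc 1 t, hess s (θbar s)
        = (∑ s ∈ Finset.Icc 1 t₀, hess s (θ t₀)) + ∑ s ∈ Finset.Ioc t₀ t, hess s (θ (s-1)) := by
      rw [show Finset.Icc 1 t = Finset.Ioc 0 t from Finset.Icc_add_one_left_eq_Ioc 0 t, show Finset.Icc 1 t₀ = Finset.Ioc 0 t₀ from Finset.Icc_add_one_left_eq_Ioc 0 t₀]
      rw [← Finset.sum_Ioc_consecutive _ (Nat.zero_le t₀) ht]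
      congr 1
      · apply Finset.sum_congr rfl
        intro s hs
        rw [Finset.mem_Ioc] at hs
        rw [hθbardef]
        simp only [hs.2, if_true]
      · apply Finset.sum_congr rfl
        intro s hs
        rw [Finset.mem_Ioc] at hs
        rw [hθbardef]
        simp only [not_le.mpr hs.1, if_false]
    have hΩeq : Ω t = Ω₀ + ∑ s ∈ Finset.Icc 1 t, hess s (θbar s) := by
      rw [hΩform t ht, hΩt₀, hsplit]
      abel
    rw [hΩeq, quadForm_add]
    have h0 : 0 ≤ quadForm Ω₀ v := PosSemidef.quadForm_nonneg' hΩ₀.posSemidef v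
    linarith
  -- the sequences
  refine ⟨fun t => L₁ * L₂ / ((K₂*t) * Real.sqrt (K₂*t)),
          fun s => 2*(ℓ s θstar - ℓ s (θ (s-1))) + quadForm ((Ω s)⁻¹) (grad s (θ (s-1))),
          ?_, ?_, ?_, ?_⟩
  · -- nonnegativity of ε
    intro t _
    exact div_nonneg (mul_nonneg hL₁ hL₂.le)
      (mul_nonneg (by positivity) (Real.sqrt_nonneg _))
  · -- the recursion inequality
    intro t ht hlt
    have hballt := hθball t ht hlt
    have hθup := hθrec (t+1) (by omega)
    simp only [Nat.add_sub_cancel] at hθup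
    have hΩup := hΩrec (t+1) (by omega)
    simp only [Nat.add_sub_cancel] at hΩup
    have hPDt1 : (Ω (t+1)).PosDef := hΩPD (t+1) (by omega)
    have hPDt : (Ω t).PosDef := hΩPD t ht
    have hdiffeq : θ (t+1) - θstar = (θ t - θstar) - mApp (Ω (t+1))⁻¹ (grad (t+1) (θ t)) := by
      rw [hθup]; abel
    have hVid : quadForm (Ω (t+1)) (θ (t+1) - θstar)
        = quadForm (Ω (t+1)) (θ t - θstar) - 2*⟪grad (t+1) (θ t), θ t - θstar⟫
          + quadForm ((Ω (t+1))⁻¹) (grad (t+1) (θ t)) := by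
      rw [hdiffeq]
      exact quadForm_update hPDt1 _ _
    have hsplitq : quadForm (Ω (t+1)) (θ t - θstar)
        = quadForm (Ω t) (θ t - θstar) + quadForm (hess (t+1) (θ t)) (θ t - θstar) := by
      rw [hΩup, quadForm_add]
    have hkey := key_quad_bound (hgrad (t+1)) (hhess (t+1)) (hhessc (t+1)) hL₁ hL₂ hballt
      (hA2 (t+1)) (hspec (t+1)) (by simpa using hPSD (t+1) (by omega))
    -- Taylor identity around θ t towards θstar
    have htlb := taylor_line (hgrad (t+1)) (hhess (t+1)) (hhessc (t+1)) (θ t) (-(θ t - θstar))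
    have e1 : θ t + -(θ t - θstar) = θstar := by abel
    rw [e1] at htlb
    have e2 : (∫ v in (0:ℝ)..1, (1-v) * quadForm (hess (t+1) (θ t + v • -(θ t - θstar))) (-(θ t - θstar)))
        = ∫ v in (0:ℝ)..1, (fun w => w * quadForm (hess (t+1) (θstar + w • (θ t - θstar))) (θ t - θstar)) (1-v) := by
      apply intervalIntegral.integral_congr
      intro v _
      beta_reduce
      rw [quadForm_neg_vec]
      have e3 : θ t + v • -(θ t - θstar) = θstar + (1-v) • (θ t - θstar) := by module
      rw [e3]
    have e4 : (∫ v in (0:ℝ)..1, (fun w => w * quadForm (hess (t+1) (θstar + w • (θ t - θstar))) (θ t - θstar)) (1-v))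
        = ∫ w in (0:ℝ)..1, w * quadForm (hess (t+1) (θstar + w • (θ t - θstar))) (θ t - θstar) := by
      have := intervalIntegral.integral_comp_sub_left
        (fun w => w * quadForm (hess (t+1) (θstar + w • (θ t - θstar))) (θ t - θstar)) 1
        (a := (0:ℝ)) (b := (1:ℝ))
      rw [this]
      norm_num
    rw [e2, e4, inner_neg_right] at htlb
    -- htlb : ℓ (t+1) θstar = ℓ (t+1) (θ t) + -⟪g,δ⟫ + I
    -- cube bound
    have hVnn : 0 ≤ quadForm (Ω t) (θ t - θstar) :=
      PosSemidef.quadForm_nonneg' hPDt.posSemidef _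
    have hcube : L₁ * L₂ * ‖θ t - θstar‖^3
        ≤ (L₁ * L₂ / ((K₂*t) * Real.sqrt (K₂*t)))
          * (quadForm (Ω t) (θ t - θstar)) ^ ((3:ℝ)/2) := by
      have ht1 : (1:ℝ) ≤ (t:ℝ) := by exact_mod_cast le_trans ht₀1 ht
      have hKt : (0:ℝ) < K₂ * t := by nlinarith
      have hlowt := hlow t ht hlt (θ t - θstar)
      set V := quadForm (Ω t) (θ t - θstar) with hVdef
      set d := ‖θ t - θstar‖ with hddef
      have hd0 : 0 ≤ d := norm_nonneg _
      rw [rpow_three_halves hVnn]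
      have h1 : Real.sqrt (K₂ * t * d^2) ≤ Real.sqrt V := Real.sqrt_le_sqrt hlowt
      have h2 : Real.sqrt (K₂ * t * d^2) = Real.sqrt (K₂*t) * d := by
        rw [Real.sqrt_mul hKt.le, Real.sqrt_sq hd0]
      rw [h2] at h1
      have h3 : (K₂*t*d^2) * (Real.sqrt (K₂*t) * d) ≤ V * Real.sqrt V := by
        apply mul_le_mul hlowt h1 (by positivity) (le_trans (by positivity) hlowt)
      have h4 : (K₂*t) * Real.sqrt (K₂*t) * d^3 = (K₂*t*d^2) * (Real.sqrt (K₂*t) * d) := by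
        ring
      have h5 : 0 < (K₂*t) * Real.sqrt (K₂*t) := by positivity
      rw [div_mul_eq_mul_div, le_div_iff₀ h5]
      calc L₁ * L₂ * d^3 * ((K₂*t) * Real.sqrt (K₂*t))
          = (L₁*L₂) * ((K₂*t) * Real.sqrt (K₂*t) * d^3) := by ring
        _ ≤ (L₁*L₂) * (V * Real.sqrt V) := by
            apply mul_le_mul_of_nonneg_left _ (mul_nonneg hL₁ hL₂.le)
            rw [h4]; exact h3
        _ = L₁ * L₂ * (V * Real.sqrt V) := by ring
    -- final assembly
    have hid : ⟪grad (t+1) (θ t), θ t - θstar⟫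
        = ℓ (t+1) (θ t) - ℓ (t+1) θstar
          + ∫ w in (0:ℝ)..1, w * quadForm (hess (t+1) (θstar + w • (θ t - θstar))) (θ t - θstar) := by
      linarith [htlb]
    rw [hVid, hsplitq]
    simp only [Nat.add_sub_cancel]
    linarith [hkey, hcube]
  · -- ε sums
    intro s t hs hst _
    have hs1 : 1 ≤ s := le_trans ht₀1 hs
    have hεeq : ∀ r' : ℕ, L₁ * L₂ / ((K₂*r') * Real.sqrt (K₂*r'))
        = (L₁*L₂/(K₂*Real.sqrt K₂)) * (1/((r':ℝ)*Real.sqrt r')) := by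
      intro r'
      rw [Real.sqrt_mul hK₂.le]
      rw [show K₂*(r':ℝ)*(Real.sqrt K₂*Real.sqrt (r':ℝ)) = (K₂*Real.sqrt K₂)*((r':ℝ)*Real.sqrt (r':ℝ)) by ring]
      rw [div_mul_eq_div_div, div_eq_mul_one_div]
    rw [Finset.sum_congr rfl (fun r' _ => hεeq r'), ← Finset.mul_sum]
    have hsum := sum_inv_rsqrt s hs1 t
    have hC0 : 0 ≤ L₁*L₂/(K₂*Real.sqrt K₂) :=
      div_nonneg (mul_nonneg hL₁ hL₂.le) (by positivity)
    have hss : 0 < Real.sqrt s := Real.sqrt_pos.mpr (by exact_mod_cast hs1)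
    calc (L₁*L₂/(K₂*Real.sqrt K₂)) * ∑ r' ∈ Finset.Icc s t, 1/((r':ℝ)*Real.sqrt r')
        ≤ (L₁*L₂/(K₂*Real.sqrt K₂)) * (3/Real.sqrt s) := mul_le_mul_of_nonneg_left hsum hC0
      _ = (3*(L₁*L₂/(K₂*Real.sqrt K₂)))/Real.sqrt s := by ring
      _ ≤ (3*(L₁*L₂/(K₂*Real.sqrt K₂)) + 1)/Real.sqrt s := by
          exact (div_le_div_iff_of_pos_right hss).mpr (by linarith)
  · -- u sums
    intro s t hs hst hle
    have htt₀ : t₀ < t := lt_of_le_of_lt hs hst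
    have hlog : 0 ≤ Real.log t := Real.log_nonneg (by exact_mod_cast (by omega : 1 ≤ t))
    rw [Finset.sum_add_distrib]
    have hmul : ∑ r' ∈ Finset.Icc (t₀+1) t, 2*(ℓ r' θstar - ℓ r' (θ (r'-1)))
        = 2 * ∑ r' ∈ Finset.Icc (t₀+1) t, (ℓ r' θstar - ℓ r' (θ (r'-1))) := by
      rw [Finset.mul_sum]
    rw [hmul]
    have h1 := hA4b t htt₀
    have h2 := hA4c t htt₀ hle
    have h3 : (2*K₃+K₅)*(x+Real.log t) = 2*(K₃*x) + 2*(K₃*Real.log t) + K₅*(x+Real.log t) := by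
      ring
    have h4 : 0 ≤ K₃ * Real.log t := mul_nonneg hK₃.le hlog
    linarith
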